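/- Let f : ℝ → (0,∞) be a probability density, absolutely continuous with almost-everywhere derivative f′, with finite Fisher information for location and scale ∫(1+z²)(f′/f)² f < ∞, and let e have density f with E[e] = 0, E[e²] = 1, E[e⁴] < ∞ and Δ := E[e⁴] − (E[e³])² − 1 > 0. Write μ₃ = E[e³], ℓ(z) = (−f′(z)/f(z), −1 − z f′(z)/f(z))ᵀ ∈ ℝ², e₁ = (1,0)ᵀ, e₂ = (0,1)ᵀ, and define ℓ₀(z) = ℓ(z) − z e₁ − ((z² − μ₃ z − 1)/Δ)·(2 e₂ − μ₃ e₁). Then E[ℓ₀(e)] = 0, E[e ℓ₀(e)] = 0 and E[e² ℓ₀(e)] = 0 (componentwise in ℝ²); that is, each component of ℓ₀ lies in the tangent set 𝒮. -/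

import Mathlib

open MeasureTheory intervalIntegral
open Set Filter Topology

lemma my_parts (f f' g g' : ℝ → ℝ) (hf : Measurable f) (hf' : Measurable f')
    (hfi : Integrable f) (hf'i : Integrable f')
    (hFTC : ∀ x y : ℝ, x ≤ y → f y - f x = ∫ v in x..y, f' v)
    (hg : ∀ t, HasDerivAt g (g' t) t) (hg'c : Continuous g')
    (x y : ℝ) (hxy : x ≤ y) :
    g y * f y - g x * f x =
      (∫ t in Set.Ioc x y, g' t * f t) + ∫ t in Set.Ioc x y, g t * f' t := by
  obtain ⟨C, hC⟩ : ∃ C, ∀ t ∈ Set.Icc x y, ‖g' t‖ ≤ C :=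
    isCompact_Icc.exists_bound_of_continuousOn hg'c.continuousOn
  have hgc : Continuous g := by
    exact continuous_iff_continuousAt.2 fun t => (hg t).continuousAt
  obtain ⟨D, hD⟩ : ∃ D, ∀ t ∈ Set.Icc x y, ‖g t‖ ≤ D :=
    isCompact_Icc.exists_bound_of_continuousOn hgc.continuousOn
  set μ := (volume : Measure ℝ).restrict (Set.Ioc x y) with hμ
  have hgFTC : ∀ a b : ℝ, a ≤ b → (∫ v in Set.Ioc a b, g' v) = g b - g a := by
    intro a b hab
    rw [← intervalIntegral.integral_of_le hab]
    exact intervalIntegral.integral_eq_sub_of_hasDerivAt (fun u _ => hg u)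
      (hg'c.intervalIntegrable a b)
  -- integrability of products on the interval
  have hg'f : Integrable (fun t => g' t * f t) μ := by
    refine (((hfi.norm.restrict (s := Set.Ioc x y)).const_mul C)).mono
      ((hg'c.measurable.mul hf).aestronglyMeasurable) ?_
    filter_upwards [ae_restrict_mem measurableSet_Ioc] with t ht
    have h1 : ‖g' t‖ ≤ C := hC t (Set.Ioc_subset_Icc_self ht)
    have : ‖g' t * f t‖ = ‖g' t‖ * ‖f t‖ := norm_mul _ _
    rw [this]
    calc ‖g' t‖ * ‖f t‖ ≤ C * ‖f t‖ := by
          exact mul_le_mul_of_nonneg_right h1 (norm_nonneg _)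
      _ ≤ ‖C * ‖f t‖‖ := le_abs_self _
  have hgf' : Integrable (fun t => g t * f' t) μ := by
    refine (((hf'i.norm.restrict (s := Set.Ioc x y)).const_mul D)).mono
      ((hgc.measurable.mul hf').aestronglyMeasurable) ?_
    filter_upwards [ae_restrict_mem measurableSet_Ioc] with t ht
    have h1 : ‖g t‖ ≤ D := hD t (Set.Ioc_subset_Icc_self ht)
    rw [norm_mul]
    calc ‖g t‖ * ‖f' t‖ ≤ D * ‖f' t‖ :=
          mul_le_mul_of_nonneg_right h1 (norm_nonneg _)
      _ ≤ ‖D * ‖f' t‖‖ := le_abs_self _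
  -- the Fubini kernel
  set k : ℝ → ℝ → ℝ := fun s t => if s ≤ t then g' s * f' t else 0 with hk_def
  have hkmeas : Measurable (Function.uncurry k) := by
    exact Measurable.ite (measurableSet_le measurable_fst measurable_snd)
      ((hg'c.measurable.comp measurable_fst).mul (hf'.comp measurable_snd)) measurable_const
  have hkint : Integrable (Function.uncurry k) (μ.prod μ) := by
    have hdom : Integrable (fun p : ℝ × ℝ => C * ‖f' p.2‖) (μ.prod μ) := by
      have h1 : Integrable (fun _ : ℝ => C) μ :=
        integrableOn_const measure_Ioc_lt_top.ne
      have h2 : Integrable (fun t => ‖f' t‖) μ := hf'i.norm.restrict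
      exact h1.mul_prod h2
    refine hdom.mono hkmeas.aestronglyMeasurable ?_
    have hprod : μ.prod μ =
        ((volume : Measure ℝ).prod volume).restrict (Set.Ioc x y ×ˢ Set.Ioc x y) :=
      Measure.prod_restrict _ _
    rw [hprod]
    filter_upwards [ae_restrict_mem (measurableSet_Ioc.prod measurableSet_Ioc)] with p hp
    have h1 : ‖g' p.1‖ ≤ C := hC p.1 (Set.Ioc_subset_Icc_self hp.1)
    have hC0 : 0 ≤ C := le_trans (norm_nonneg _) h1
    show ‖k p.1 p.2‖ ≤ ‖C * ‖f' p.2‖‖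
    rw [hk_def]
    by_cases h : p.1 ≤ p.2
    · simp only [h, if_true]
      rw [norm_mul]
      calc ‖g' p.1‖ * ‖f' p.2‖ ≤ C * ‖f' p.2‖ :=
            mul_le_mul_of_nonneg_right h1 (norm_nonneg _)
        _ ≤ ‖C * ‖f' p.2‖‖ := le_abs_self _
    · simp only [h, if_false, norm_zero]
      positivity
  have swap := MeasureTheory.integral_integral_swap hkint
  -- compute the left iterated integral
  have L1 : (∫ s, ∫ t, k s t ∂μ ∂μ) = ∫ s in Set.Ioc x y, g' s * (f y - f s) := by
    refine integral_congr_ae ?_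
    filter_upwards [ae_restrict_mem measurableSet_Ioc] with s hs
    have heq : ∀ t, k s t = (Set.Ici s).indicator (fun t => g' s * f' t) t := by
      intro t
      rw [hk_def]
      simp only [Set.indicator_apply, Set.mem_Ici]
    calc (∫ t, k s t ∂μ) = ∫ t in Set.Ioc x y, (Set.Ici s).indicator (fun t => g' s * f' t) t := by
          exact integral_congr_ae (Filter.Eventually.of_forall heq)
      _ = ∫ t in Set.Ioc x y ∩ Set.Ici s, g' s * f' t := by
          rw [setIntegral_indicator measurableSet_Ici]
      _ = ∫ t in Set.Ioc s y, g' s * f' t := by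
          have hset : Set.Ioc x y ∩ Set.Ici s = Set.Icc s y := by
            ext t
            simp only [Set.mem_inter_iff, Set.mem_Ioc, Set.mem_Ici, Set.mem_Icc]
            constructor
            · rintro ⟨⟨_, ht2⟩, ht3⟩; exact ⟨ht3, ht2⟩
            · rintro ⟨ht1, ht2⟩; exact ⟨⟨lt_of_lt_of_le hs.1 ht1, ht2⟩, ht1⟩
          rw [hset, integral_Icc_eq_integral_Ioc]
      _ = g' s * ∫ t in Set.Ioc s y, f' t := MeasureTheory.integral_const_mul _ _
      _ = g' s * (f y - f s) := by
          rw [← intervalIntegral.integral_of_le hs.2, ← hFTC s y hs.2]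
  -- compute the right iterated integral
  have R1 : (∫ t, ∫ s, k s t ∂μ ∂μ) = ∫ t in Set.Ioc x y, (g t - g x) * f' t := by
    refine integral_congr_ae ?_
    filter_upwards [ae_restrict_mem measurableSet_Ioc] with t ht
    have heq : ∀ s, k s t = (Set.Iic t).indicator (fun s => g' s * f' t) s := by
      intro s
      rw [hk_def]
      simp only [Set.indicator_apply, Set.mem_Iic]
    calc (∫ s, k s t ∂μ) = ∫ s in Set.Ioc x y, (Set.Iic t).indicator (fun s => g' s * f' t) s := by
          exact integral_congr_ae (Filter.Eventually.of_forall heq)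
      _ = ∫ s in Set.Ioc x y ∩ Set.Iic t, g' s * f' t := by
          rw [setIntegral_indicator measurableSet_Iic]
      _ = ∫ s in Set.Ioc x t, g' s * f' t := by
          have hset : Set.Ioc x y ∩ Set.Iic t = Set.Ioc x t := by
            ext s
            simp only [Set.mem_inter_iff, Set.mem_Ioc, Set.mem_Iic]
            constructor
            · rintro ⟨⟨hs1, _⟩, hs3⟩; exact ⟨hs1, hs3⟩
            · rintro ⟨hs1, hs2⟩; exact ⟨⟨hs1, le_trans hs2 ht.2⟩, hs2⟩
          rw [hset]
      _ = (∫ s in Set.Ioc x t, g' s) * f' t := MeasureTheory.integral_mul_const _ _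
      _ = (g t - g x) * f' t := by rw [hgFTC x t ht.1.le]
  rw [L1, R1] at swap
  -- expand both sides
  have hIg' : IntegrableOn g' (Set.Ioc x y) := hg'c.integrableOn_Ioc
  have L2 : (∫ s in Set.Ioc x y, g' s * (f y - f s))
      = (g y - g x) * f y - ∫ s in Set.Ioc x y, g' s * f s := by
    have h1 : ∀ s, g' s * (f y - f s) = g' s * f y - g' s * f s := fun s => by ring
    rw [integral_congr_ae (Filter.Eventually.of_forall h1),
      integral_sub (hIg'.mul_const (f y)) hg'f, MeasureTheory.integral_mul_const, hgFTC x y hxy]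
  have R2 : (∫ t in Set.Ioc x y, (g t - g x) * f' t)
      = (∫ t in Set.Ioc x y, g t * f' t) - g x * (f y - f x) := by
    have h1 : ∀ t, (g t - g x) * f' t = g t * f' t - g x * f' t := fun t => by ring
    have h2 : (∫ a, f' a ∂μ) = f y - f x := by
      rw [hμ, ← intervalIntegral.integral_of_le hxy]
      exact (hFTC x y hxy).symm
    rw [integral_congr_ae (Filter.Eventually.of_forall h1),
      integral_sub hgf' ((hf'i.restrict).const_mul (g x)), MeasureTheory.integral_const_mul, h2]
  rw [L2, R2] at swap
  linarith

lemma my_key (f f' g g' : ℝ → ℝ) (hf : Measurable f) (hf' : Measurable f')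
    (hfi : Integrable f) (hf'i : Integrable f')
    (hFTC : ∀ x y : ℝ, x ≤ y → f y - f x = ∫ v in x..y, f' v)
    (hg : ∀ t, HasDerivAt g (g' t) t) (hg'c : Continuous g')
    (hg'f : Integrable (fun t => g' t * f t)) (hgf' : Integrable (fun t => g t * f' t))
    (hgf : Integrable (fun t => g t * f t)) :
    (∫ t, g' t * f t) + (∫ t, g t * f' t) = 0 := by
  set G : ℝ → ℝ := fun t => g' t * f t + g t * f' t with hG_def
  have hG : Integrable G := hg'f.add hgf'
  set F : ℝ → ℝ := fun t => g t * f t with hF_def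
  have hid : ∀ x y : ℝ, x ≤ y → F y - F x = ∫ t in x..y, G t := by
    intro x y hxy
    rw [intervalIntegral.integral_of_le hxy]
    rw [integral_add (hg'f.restrict) (hgf'.restrict)]
    exact my_parts f f' g g' hf hf' hfi hf'i hFTC hg hg'c x y hxy
  have hlimtop : Tendsto F atTop (𝓝 (F 0 + ∫ t in Set.Ioi (0:ℝ), G t)) := by
    have h1 := MeasureTheory.intervalIntegral_tendsto_integral_Ioi (0:ℝ)
      hG.integrableOn (tendsto_id (α := ℝ) (x := atTop))
    refine Tendsto.congr' ?_ (tendsto_const_nhds.add h1)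
    filter_upwards [Filter.eventually_ge_atTop (0:ℝ)] with y hy
    have := hid 0 y hy
    simp only [id] at this ⊢
    linarith
  have hlimbot : Tendsto F atBot (𝓝 (F 0 - ∫ t in Set.Iic (0:ℝ), G t)) := by
    have h1 := MeasureTheory.intervalIntegral_tendsto_integral_Iic (0:ℝ)
      hG.integrableOn (tendsto_id (α := ℝ) (x := atBot))
    refine Tendsto.congr' ?_ (tendsto_const_nhds.sub h1)
    filter_upwards [Filter.eventually_le_atBot (0:ℝ)] with x hx
    have := hid x 0 hx
    simp only [id] at this ⊢
    linarith
  have Ltop : F 0 + (∫ t in Set.Ioi (0:ℝ), G t) = 0 := by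
    have hint : IntegrableAtFilter F atTop volume :=
      ⟨Set.Ioi 0, Ioi_mem_atTop 0, hgf.integrableOn⟩
    refine IntegrableAtFilter.eq_zero_of_tendsto hint ?_ hlimtop
    intro s hs
    rcases mem_atTop_sets.1 hs with ⟨b, hb⟩
    rw [← top_le_iff, ← Real.volume_Ici (a := b)]
    exact measure_mono hb
  have Lbot : F 0 - (∫ t in Set.Iic (0:ℝ), G t) = 0 := by
    have hint : IntegrableAtFilter F atBot volume :=
      ⟨Set.Iic 0, Iic_mem_atBot 0, hgf.integrableOn⟩
    refine IntegrableAtFilter.eq_zero_of_tendsto hint ?_ hlimbot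
    intro s hs
    rcases mem_atBot_sets.1 hs with ⟨b, hb⟩
    rw [← top_le_iff, ← Real.volume_Iic (a := b)]
    exact measure_mono hb
  have htot : Tendsto (fun y : ℝ => ∫ t in (-y)..y, G t) atTop (𝓝 (∫ t, G t)) :=
    MeasureTheory.intervalIntegral_tendsto_integral hG tendsto_neg_atTop_atBot tendsto_id
  have htot2 : Tendsto (fun y : ℝ => ∫ t in (-y)..y, G t) atTop (𝓝 0) := by
    rw [Ltop] at hlimtop
    rw [Lbot] at hlimbot
    have h2 : Tendsto (fun y : ℝ => F y - F (-y)) atTop (𝓝 (0 - 0)) :=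
      hlimtop.sub (hlimbot.comp tendsto_neg_atTop_atBot)
    rw [sub_zero] at h2
    refine Tendsto.congr' ?_ h2
    filter_upwards [Filter.eventually_ge_atTop (0:ℝ)] with y hy
    exact (hid (-y) y (by linarith))
  have : (∫ t, G t) = 0 := tendsto_nhds_unique htot htot2
  rw [← this, hG_def, integral_add hg'f hgf']

lemma my_abs_pow6 (z : ℝ) (k : ℕ) (hk : k ≤ 6) : |z| ^ k ≤ (1 + z ^ 2) * (1 + z ^ 4) := by
  rcases le_total (|z|) 1 with h | h
  · have h1 : |z| ^ k ≤ 1 := pow_le_one₀ (abs_nonneg z) h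
    nlinarith [sq_nonneg z, sq_nonneg (z^2), sq_nonneg (z^3)]
  · have h1 : |z| ^ k ≤ |z| ^ 6 := pow_le_pow_right₀ h hk
    have h2 : |z| ^ 6 = z ^ 6 := by
      rw [← abs_pow, abs_of_nonneg (by positivity)]
    nlinarith [sq_nonneg z, sq_nonneg (z^2), sq_nonneg (z^3)]

lemma my_abs_pow4 (z : ℝ) (k : ℕ) (hk : k ≤ 4) : |z| ^ k ≤ 1 + z ^ 4 := by
  rcases le_total (|z|) 1 with h | h
  · have h1 : |z| ^ k ≤ 1 := pow_le_one₀ (abs_nonneg z) h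
    nlinarith [sq_nonneg (z^2)]
  · have h1 : |z| ^ k ≤ |z| ^ 4 := pow_le_pow_right₀ h hk
    have h2 : |z| ^ 4 = z ^ 4 := by
      rw [← abs_pow, abs_of_nonneg (by positivity)]
    nlinarith

lemma my_amgm (b s z : ℝ) (_hb : 0 ≤ b) (_hs : 0 ≤ s) (hb2 : b ^ 2 ≤ (1 + z ^ 2) * (1 + z ^ 4)) :
    b * s ≤ (1 + z ^ 2) * s ^ 2 + 1 + z ^ 4 := by
  have hz : (0:ℝ) < 1 + z ^ 2 := by positivity
  have hz4 : (0:ℝ) < 1 + z ^ 4 := by positivity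
  nlinarith [sq_nonneg (b - (1 + z ^ 2) * s), mul_nonneg (sq_nonneg (1 + z ^ 2)) (sq_nonneg s),
    mul_pos hz hz4]


/-- For a positive, absolutely continuous probability density `f` with finite Fisher
information for location and scale, and error density moments `E[e] = 0`, `E[e²] = 1`,
`E[e⁴] < ∞`, `Δ = E[e⁴] − μ₃² − 1 > 0`, the function
`ℓ₀(z) = ℓ(z) − z e₁ − ((z² − μ₃ z − 1)/Δ)(2 e₂ − μ₃ e₁)` built from the score vector
`ℓ(z) = (−f′(z)/f(z), −1 − z f′(z)/f(z))` satisfies `E[ℓ₀(e)] = 0`, `E[e ℓ₀(e)] = 0` and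
`E[e² ℓ₀(e)] = 0` componentwise in `ℝ²`. -/
theorem score_projection_mem_tangent_set
    (f f' : ℝ → ℝ)
    (hpos : ∀ z, 0 < f z) (hf : Measurable f) (hf' : Measurable f')
    (hint : Integrable f) (hdens : ∫ z, f z = 1)
    (hFTC : ∀ x y : ℝ, x ≤ y → f y - f x = ∫ v in x..y, f' v)
    (hFisher : Integrable (fun z => (1 + z ^ 2) * (f' z / f z) ^ 2 * f z))
    (hmean : ∫ z, z * f z = 0) (hvar : ∫ z, z ^ 2 * f z = 1)
    (hmom4 : Integrable (fun z => z ^ 4 * f z))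
    (μ₃ Δ : ℝ) (hμ₃ : μ₃ = ∫ z, z ^ 3 * f z)
    (hΔ : Δ = (∫ z, z ^ 4 * f z) - μ₃ ^ 2 - 1) (hΔpos : 0 < Δ)
    (ℓ ℓ₀ : ℝ → ℝ × ℝ)
    (hℓ : ∀ z, ℓ z = (-(f' z) / f z, -1 - z * f' z / f z))
    (hℓ₀ : ∀ z, ℓ₀ z = ℓ z - z • ((1 : ℝ), (0 : ℝ))
      - ((z ^ 2 - μ₃ * z - 1) / Δ) • ((2 : ℝ) • ((0 : ℝ), (1 : ℝ)) - μ₃ • ((1 : ℝ), (0 : ℝ)))) :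
    (∫ z, f z • ℓ₀ z = 0) ∧
    (∫ z, (z * f z) • ℓ₀ z = 0) ∧
    (∫ z, (z ^ 2 * f z) • ℓ₀ z = 0) := by
  have hΔ0 : Δ ≠ 0 := ne_of_gt hΔpos
  have hfnn : ∀ z, 0 ≤ f z := fun z => (hpos z).le
  have hbound : Integrable (fun z => f z + z ^ 4 * f z) := hint.add hmom4
  -- integrability of z^k * f
  have hA : ∀ k : ℕ, k ≤ 4 → Integrable (fun z => z ^ k * f z) := by
    intro k hk
    refine hbound.mono ((measurable_id.pow_const k |>.mul hf).aestronglyMeasurable)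
      (Filter.Eventually.of_forall fun z => ?_)
    have h1 : |z| ^ k ≤ 1 + z ^ 4 := my_abs_pow4 z k hk
    have h2 : ‖z ^ k * f z‖ = |z| ^ k * f z := by
      rw [Real.norm_eq_abs, abs_mul, abs_pow, abs_of_nonneg (hfnn z)]
    have h3 : ‖f z + z ^ 4 * f z‖ = f z + z ^ 4 * f z :=
      by rw [Real.norm_eq_abs, abs_of_nonneg (add_nonneg (hfnn z)
        (mul_nonneg (by positivity) (hfnn z)))]
    rw [h2, h3]
    nlinarith [mul_le_mul_of_nonneg_right h1 (hfnn z), hfnn z]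
  have hA1 : Integrable (fun z => z * f z) := by
    have := hA 1 (by norm_num)
    simpa using this
  have hA2 : Integrable (fun z => z ^ 2 * f z) := hA 2 (by norm_num)
  have hA3 : Integrable (fun z => z ^ 3 * f z) := hA 3 (by norm_num)
  -- integrability of z^k * f'
  have hκ : Integrable (fun z => (1 + z ^ 2) * (f' z / f z) ^ 2 * f z + (f z + z ^ 4 * f z)) :=
    hFisher.add hbound
  have hB : ∀ k : ℕ, k ≤ 3 → Integrable (fun z => z ^ k * f' z) := by
    intro k hk
    refine hκ.mono ((measurable_id.pow_const k |>.mul hf').aestronglyMeasurable)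
      (Filter.Eventually.of_forall fun z => ?_)
    have hu : 0 < f z := hpos z
    have hb2 : (|z| ^ k) ^ 2 ≤ (1 + z ^ 2) * (1 + z ^ 4) := by
      rw [← pow_mul]
      exact my_abs_pow6 z (k * 2) (by omega)
    have hkey : |z| ^ k * |f' z / f z| ≤ (1 + z ^ 2) * |f' z / f z| ^ 2 + 1 + z ^ 4 :=
      my_amgm _ _ _ (pow_nonneg (abs_nonneg z) k) (abs_nonneg _) hb2
    have hv : f' z = (f' z / f z) * f z := by
      field_simp
    have hrhs : (0:ℝ) ≤ (1 + z ^ 2) * (f' z / f z) ^ 2 * f z + (f z + z ^ 4 * f z) :=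
      add_nonneg (mul_nonneg (by positivity) (hfnn z))
        (add_nonneg (hfnn z) (mul_nonneg (by positivity) (hfnn z)))
    have heq : ‖z ^ k * f' z‖ = (|z| ^ k * |f' z / f z|) * f z := by
      rw [Real.norm_eq_abs]
      conv_lhs => rw [hv]
      rw [show z ^ k * (f' z / f z * f z) = (z ^ k * (f' z / f z)) * f z by ring,
        abs_mul, abs_mul, abs_pow, abs_of_nonneg hu.le]
    rw [heq, Real.norm_eq_abs, abs_of_nonneg hrhs]
    calc (|z| ^ k * |f' z / f z|) * f z
        ≤ ((1 + z ^ 2) * |f' z / f z| ^ 2 + 1 + z ^ 4) * f z :=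
          mul_le_mul_of_nonneg_right hkey hu.le
      _ = (1 + z ^ 2) * (f' z / f z) ^ 2 * f z + (f z + z ^ 4 * f z) := by
          rw [sq_abs]
          ring
  have hB0 : Integrable f' := by
    have := hB 0 (by norm_num)
    simpa using this
  have hB1 : Integrable (fun z => z * f' z) := by
    have := hB 1 (by norm_num)
    simpa using this
  have hB2 : Integrable (fun z => z ^ 2 * f' z) := hB 2 (by norm_num)
  have hB3 : Integrable (fun z => z ^ 3 * f' z) := hB 3 (by norm_num)
  -- the four moment identities for f'
  have key0 : (∫ t, (0:ℝ) * f t) + (∫ t, (1:ℝ) * f' t) = 0 :=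
    my_key f f' (fun _ => (1:ℝ)) (fun _ => (0:ℝ)) hf hf' hint hB0 hFTC
      (fun t => hasDerivAt_const t 1) continuous_const
      (hint.const_mul 0) (hB0.const_mul 1) (hint.const_mul 1)
  have vB0 : (∫ z, f' z) = 0 := by
    simpa using key0
  have key1 : (∫ t, (1:ℝ) * f t) + (∫ t, t * f' t) = 0 :=
    my_key f f' (fun t => t) (fun _ => (1:ℝ)) hf hf' hint hB0 hFTC
      (fun t => by exact hasDerivAt_id t) continuous_const
      (hint.const_mul 1) hB1 hA1
  have vB1 : (∫ z, z * f' z) = -1 := by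
    simp only [one_mul, hdens] at key1
    linarith
  have key2 : (∫ t, (2 * t) * f t) + (∫ t, t ^ 2 * f' t) = 0 :=
    my_key f f' (fun t => t ^ 2) (fun t => 2 * t) hf hf' hint hB0 hFTC
      (fun t => by simpa using hasDerivAt_pow 2 t) (continuous_const.mul continuous_id)
      (by simpa [mul_assoc] using hA1.const_mul 2) hB2 hA2
  have vB2 : (∫ z, z ^ 2 * f' z) = 0 := by
    have h2 : (∫ t, (2 * t) * f t) = 2 * ∫ t, t * f t := by
      simp only [mul_assoc]
      exact MeasureTheory.integral_const_mul 2 _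
    rw [h2, hmean] at key2
    linarith
  have key3 : (∫ t, (3 * t ^ 2) * f t) + (∫ t, t ^ 3 * f' t) = 0 :=
    my_key f f' (fun t => t ^ 3) (fun t => 3 * t ^ 2) hf hf' hint hB0 hFTC
      (fun t => by simpa using hasDerivAt_pow 3 t) (continuous_const.mul (continuous_pow 2))
      (by simpa [mul_assoc] using hA2.const_mul 3) hB3 hA3
  have vB3 : (∫ z, z ^ 3 * f' z) = -3 := by
    have h2 : (∫ t, (3 * t ^ 2) * f t) = 3 * ∫ t, t ^ 2 * f t := by
      simp only [mul_assoc]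
      exact MeasureTheory.integral_const_mul 3 _
    rw [h2, hvar] at key3
    linarith
  have vA3 : (∫ z, z ^ 3 * f z) = μ₃ := hμ₃.symm
  have vA4 : (∫ z, z ^ 4 * f z) = Δ + μ₃ ^ 2 + 1 := by linarith
  -- generic 4-term combination lemma inline
  have comb : ∀ (u1 u2 u3 u4 : ℝ → ℝ), Integrable u1 → Integrable u2 → Integrable u3 →
      Integrable u4 → ∀ c1 c2 c3 c4 : ℝ,
      (∫ z, (c1 * u1 z + c2 * u2 z + c3 * u3 z + c4 * u4 z))
        = c1 * (∫ z, u1 z) + c2 * (∫ z, u2 z) + c3 * (∫ z, u3 z) + c4 * (∫ z, u4 z) := by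
    intro u1 u2 u3 u4 h1 h2 h3 h4 c1 c2 c3 c4
    have i1 : Integrable (fun z => c1 * u1 z) := h1.const_mul c1
    have i2 : Integrable (fun z => c2 * u2 z) := h2.const_mul c2
    have i3 : Integrable (fun z => c3 * u3 z) := h3.const_mul c3
    have i4 : Integrable (fun z => c4 * u4 z) := h4.const_mul c4
    have i12 : Integrable (fun z => c1 * u1 z + c2 * u2 z) := i1.add i2
    have i123 : Integrable (fun z => c1 * u1 z + c2 * u2 z + c3 * u3 z) := i12.add i3
    rw [integral_add i123 i4, integral_add i12 i3, integral_add i1 i2,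
      MeasureTheory.integral_const_mul, MeasureTheory.integral_const_mul,
      MeasureTheory.integral_const_mul, MeasureTheory.integral_const_mul]
  -- explicit form of ℓ₀
  have hc : ∀ z : ℝ, ℓ₀ z = (-(f' z) / f z - z + ((z ^ 2 - μ₃ * z - 1) / Δ) * μ₃,
      -1 - z * f' z / f z - ((z ^ 2 - μ₃ * z - 1) / Δ) * 2) := by
    intro z
    rw [hℓ₀ z, hℓ z]
    simp only [Prod.smul_mk, smul_eq_mul, Prod.mk_sub_mk, Prod.mk.injEq]
    constructor <;> ring
  refine ⟨?_, ?_, ?_⟩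
  · have e1 : ∀ z : ℝ, f z • ℓ₀ z =
        ((-(μ₃/Δ)) * f z + (-1 - μ₃^2/Δ) * (z * f z) + (μ₃/Δ) * (z^2 * f z) + (-1) * f' z,
         (-1 + 2/Δ) * f z + (2*μ₃/Δ) * (z * f z) + (-(2/Δ)) * (z^2 * f z) + (-1) * (z * f' z)) := by
      intro z
      rw [hc z]
      have hfz : f z ≠ 0 := (hpos z).ne'
      simp only [Prod.smul_mk, smul_eq_mul, Prod.mk.injEq]
      constructor <;> field_simp <;> ring
    have hP : Integrable (fun z =>
        (-(μ₃/Δ)) * f z + (-1 - μ₃^2/Δ) * (z * f z) + (μ₃/Δ) * (z^2 * f z) + (-1) * f' z) :=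
      (((hint.const_mul _).add (hA1.const_mul _)).add (hA2.const_mul _)).add (hB0.const_mul _)
    have hQ : Integrable (fun z =>
        (-1 + 2/Δ) * f z + (2*μ₃/Δ) * (z * f z) + (-(2/Δ)) * (z^2 * f z) + (-1) * (z * f' z)) :=
      (((hint.const_mul _).add (hA1.const_mul _)).add (hA2.const_mul _)).add (hB1.const_mul _)
    rw [integral_congr_ae (Filter.Eventually.of_forall e1), integral_pair hP hQ,
      comb _ _ _ _ hint hA1 hA2 hB0, comb _ _ _ _ hint hA1 hA2 hB1,
      hdens, hmean, hvar, vB0, vB1, Prod.mk_eq_zero]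
    constructor <;> (field_simp; try ring)
  · have e1 : ∀ z : ℝ, (z * f z) • ℓ₀ z =
        ((-(μ₃/Δ)) * (z * f z) + (-1 - μ₃^2/Δ) * (z^2 * f z) + (μ₃/Δ) * (z^3 * f z)
            + (-1) * (z * f' z),
         (-1 + 2/Δ) * (z * f z) + (2*μ₃/Δ) * (z^2 * f z) + (-(2/Δ)) * (z^3 * f z)
            + (-1) * (z^2 * f' z)) := by
      intro z
      rw [hc z]
      have hfz : f z ≠ 0 := (hpos z).ne'
      simp only [Prod.smul_mk, smul_eq_mul, Prod.mk.injEq]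
      constructor <;> field_simp <;> ring
    have hP : Integrable (fun z =>
        (-(μ₃/Δ)) * (z * f z) + (-1 - μ₃^2/Δ) * (z^2 * f z) + (μ₃/Δ) * (z^3 * f z)
          + (-1) * (z * f' z)) :=
      (((hA1.const_mul _).add (hA2.const_mul _)).add (hA3.const_mul _)).add (hB1.const_mul _)
    have hQ : Integrable (fun z =>
        (-1 + 2/Δ) * (z * f z) + (2*μ₃/Δ) * (z^2 * f z) + (-(2/Δ)) * (z^3 * f z)
          + (-1) * (z^2 * f' z)) :=
      (((hA1.const_mul _).add (hA2.const_mul _)).add (hA3.const_mul _)).add (hB2.const_mul _)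
    rw [integral_congr_ae (Filter.Eventually.of_forall e1), integral_pair hP hQ,
      comb _ _ _ _ hA1 hA2 hA3 hB1, comb _ _ _ _ hA1 hA2 hA3 hB2,
      hmean, hvar, vA3, vB1, vB2, Prod.mk_eq_zero]
    constructor <;> (field_simp; try ring)
  · have e1 : ∀ z : ℝ, (z ^ 2 * f z) • ℓ₀ z =
        ((-(μ₃/Δ)) * (z^2 * f z) + (-1 - μ₃^2/Δ) * (z^3 * f z) + (μ₃/Δ) * (z^4 * f z)
            + (-1) * (z^2 * f' z),
         (-1 + 2/Δ) * (z^2 * f z) + (2*μ₃/Δ) * (z^3 * f z) + (-(2/Δ)) * (z^4 * f z)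
            + (-1) * (z^3 * f' z)) := by
      intro z
      rw [hc z]
      have hfz : f z ≠ 0 := (hpos z).ne'
      simp only [Prod.smul_mk, smul_eq_mul, Prod.mk.injEq]
      constructor <;> field_simp <;> ring
    have hP : Integrable (fun z =>
        (-(μ₃/Δ)) * (z^2 * f z) + (-1 - μ₃^2/Δ) * (z^3 * f z) + (μ₃/Δ) * (z^4 * f z)
          + (-1) * (z^2 * f' z)) :=
      (((hA2.const_mul _).add (hA3.const_mul _)).add (hmom4.const_mul _)).add (hB2.const_mul _)
    have hQ : Integrable (fun z =>
        (-1 + 2/Δ) * (z^2 * f z) + (2*μ₃/Δ) * (z^3 * f z) + (-(2/Δ)) * (z^4 * f z)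
          + (-1) * (z^3 * f' z)) :=
      (((hA2.const_mul _).add (hA3.const_mul _)).add (hmom4.const_mul _)).add (hB3.const_mul _)
    rw [integral_congr_ae (Filter.Eventually.of_forall e1), integral_pair hP hQ,
      comb _ _ _ _ hA2 hA3 hmom4 hB2, comb _ _ _ _ hA2 hA3 hmom4 hB3,
      hvar, vA3, vA4, vB2, vB3, Prod.mk_eq_zero]
    constructor <;> (field_simp; try ring)
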